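/- Let n ≥ 1 and let F be a subset of a De Morgan lattice L. Then F is a classical upset of L if and only if there exist a Boolean algebra B, a surjective lattice homomorphism h : L → B satisfying h(¬x) = (h x)ᶜ for all x ∈ L, and a nonempty proper upset G of B with F = h⁻¹(G). Moreover, F is a classical n-filter on L if and only if such B, h, G exist with G additionally an n-filter on B. -/

import Mathlib

/-- A De Morgan lattice: a distributive lattice with an antitone involution. -/
class DeMorgan (L : Type*) extends DistribLattice L where
  dneg : L → L
  dneg_dneg : ∀ x : L, dneg (dneg x) = x
  dneg_sup : ∀ x y : L, dneg (x ⊔ y) = dneg x ⊓ dneg y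

prefix:max "∼" => DeMorgan.dneg

section Defs

variable {α : Type*}

/-- An upward closed subset of a lattice. -/
def IsUpset [Lattice α] (F : Set α) : Prop :=
  ∀ ⦃x y : α⦄, x ∈ F → x ≤ y → y ∈ F

/-- A lattice filter: an upset closed under binary meets. -/
def IsLatFilter [Lattice α] (F : Set α) : Prop :=
  IsUpset F ∧ ∀ x y : α, x ∈ F → y ∈ F → x ⊓ y ∈ F

/-- An `n`-filter: an upset such that for every nonempty finite `Y`, if the meet of
every nonempty subset of `Y` of size at most `n` lies in `F`, then so does the meet of `Y`. -/
def IsNFilter [Lattice α] (n : ℕ) (F : Set α) : Prop :=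
  IsUpset F ∧ ∀ (Y : Finset α) (hY : Y.Nonempty),
    (∀ (X : Finset α) (hX : X.Nonempty), X ⊆ Y → X.card ≤ n → X.inf' hX id ∈ F) →
    Y.inf' hY id ∈ F

/-- A prime upset: `x ⊔ y ∈ F` implies `x ∈ F` or `y ∈ F`. -/
def IsPrimeUpset [Lattice α] (F : Set α) : Prop :=
  ∀ x y : α, x ⊔ y ∈ F → x ∈ F ∨ y ∈ F

/-- A downward closed subset of a lattice. -/
def IsDownset [Lattice α] (I : Set α) : Prop :=
  ∀ ⦃x y : α⦄, x ∈ I → y ≤ x → y ∈ I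

/-- A lattice ideal: a downset closed under binary joins. -/
def IsIdeal [Lattice α] (I : Set α) : Prop :=
  IsDownset I ∧ ∀ x y : α, x ∈ I → y ∈ I → x ⊔ y ∈ I

/-- An `n`-ideal: the order dual notion of an `n`-filter. -/
def IsNIdeal [Lattice α] (n : ℕ) (I : Set α) : Prop :=
  IsDownset I ∧ ∀ (Y : Finset α) (hY : Y.Nonempty),
    (∀ (X : Finset α) (hX : X.Nonempty), X ⊆ Y → X.card ≤ n → X.sup' hX id ∈ I) →
    Y.sup' hY id ∈ I

variable {L : Type*} [DeMorgan L]

/-- Almost complete upset: `x ∈ F` implies `x ⊓ (y ⊔ ∼y) ∈ F`. -/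
def AlmostComplete (F : Set L) : Prop := ∀ x ∈ F, ∀ y : L, x ⊓ (y ⊔ ∼y) ∈ F

/-- Complete upset: almost complete and nonempty. -/
def IsCompleteUpset (F : Set L) : Prop := AlmostComplete F ∧ F.Nonempty

/-- Almost consistent upset: `(x ⊓ ∼x) ⊔ y ∈ F` implies `y ∈ F`. -/
def AlmostConsistent (F : Set L) : Prop := ∀ x y : L, (x ⊓ ∼x) ⊔ y ∈ F → y ∈ F

/-- Consistent upset: almost consistent and not total. -/
def IsConsistentUpset (F : Set L) : Prop := AlmostConsistent F ∧ F ≠ Set.univ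

/-- Classical upset: complete and consistent. -/
def IsClassicalUpset (F : Set L) : Prop := IsCompleteUpset F ∧ IsConsistentUpset F

/-- Kalman upset. -/
def IsKalmanUpset (F : Set L) : Prop :=
  ∀ x y z u : L, ((x ⊓ ∼x) ⊓ z) ⊔ u ∈ F → ((y ⊔ ∼y) ⊓ z) ⊔ u ∈ F

/-- A homomorphism of De Morgan lattices. -/
def IsDMHom {L M : Type*} [DeMorgan L] [DeMorgan M] (h : L → M) : Prop :=
  (∀ x y : L, h (x ⊓ y) = h x ⊓ h y) ∧ (∀ x y : L, h (x ⊔ y) = h x ⊔ h y) ∧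
    ∀ x : L, h (∼x) = ∼(h x)

/-- The filter generated by all elements of the form `x ⊔ ∼x`. -/
def Fcomp (L : Type*) [DeMorgan L] : Set L :=
  {a | ∃ (s : Finset L) (hs : s.Nonempty), s.inf' hs (fun x => x ⊔ ∼x) ≤ a}

/-- The `n`-filter generated by a set. -/
def nFilterGen (n : ℕ) (U : Set L) : Set L :=
  ⋂₀ {F : Set L | IsNFilter n F ∧ U ⊆ F}

/-- `Comp U`. -/
def CompCl (U : Set L) : Set L := {x | ∃ a ∈ U, ∃ f ∈ Fcomp L, a ⊓ f ≤ x}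

/-- `Cons U`. -/
def ConsCl (U : Set L) : Set L := {x | ∃ f ∈ Fcomp L, ∼f ⊔ x ∈ U}

/-- A congruence of De Morgan lattices, as a binary relation. -/
def IsCongruence (θ : L → L → Prop) : Prop :=
  Equivalence θ ∧
  (∀ a b c d : L, θ a b → θ c d → θ (a ⊓ c) (b ⊓ d)) ∧
  (∀ a b c d : L, θ a b → θ c d → θ (a ⊔ c) (b ⊔ d)) ∧
  ∀ a b : L, θ a b → θ (∼a) (∼b)

end Defs

/-- The four-element De Morgan lattice `DM₁` on `Bool × Bool`. -/
instance : DeMorgan (Bool × Bool) :=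
  { (inferInstance : DistribLattice (Bool × Bool)) with
    dneg := fun p => (!p.2, !p.1)
    dneg_dneg := by decide
    dneg_sup := by decide }

/-- Powers of `DM₁`, with componentwise operations. -/
instance {ι : Type*} : DeMorgan (ι → Bool × Bool) :=
  { (inferInstance : DistribLattice (ι → Bool × Bool)) with
    dneg := fun f i => ∼(f i)
    dneg_dneg := fun f => funext fun i => DeMorgan.dneg_dneg (f i)
    dneg_sup := fun f g => funext fun i => DeMorgan.dneg_sup (f i) (g i) }

universe u

namespace S10

variable {L : Type u} [DeMorgan L]

lemma dneg_inf (x y : L) : ∼(x ⊓ y) = ∼x ⊔ ∼y := by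
  have h := DeMorgan.dneg_sup (∼x) (∼y)
  rw [DeMorgan.dneg_dneg, DeMorgan.dneg_dneg] at h
  rw [← h, DeMorgan.dneg_dneg]

lemma dneg_le_dneg {x y : L} (h : x ≤ y) : ∼y ≤ ∼x := by
  have h2 : ∼(x ⊔ y) = ∼x ⊓ ∼y := DeMorgan.dneg_sup x y
  rw [sup_eq_right.mpr h] at h2
  rw [h2]
  exact inf_le_left

lemma dneg_inf' (s : Finset L) (hs : s.Nonempty) (g : L → L) :
    ∼(s.inf' hs g) = s.sup' hs fun x => ∼(g x) := by
  induction hs using Finset.Nonempty.cons_induction with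
  | singleton a => simp
  | cons a s ha hs ih => rw [Finset.inf'_cons (H := hs), Finset.sup'_cons (H := hs), dneg_inf, ih]

lemma dneg_sup' (s : Finset L) (hs : s.Nonempty) (g : L → L) :
    ∼(s.sup' hs g) = s.inf' hs fun x => ∼(g x) := by
  induction hs using Finset.Nonempty.cons_induction with
  | singleton a => simp
  | cons a s ha hs ih => rw [Finset.sup'_cons (H := hs), Finset.inf'_cons (H := hs), DeMorgan.dneg_sup, ih]

/-- The ideal generated by the elements `x ⊓ ∼x`. -/
def Icons (L : Type u) [DeMorgan L] : Set L :=
  {a | ∃ (s : Finset L) (hs : s.Nonempty), a ≤ s.sup' hs (fun x => x ⊓ ∼x)}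

lemma supdneg_mem_Fcomp (x : L) : x ⊔ ∼x ∈ Fcomp L :=
  ⟨{x}, Finset.singleton_nonempty x, by simp⟩

lemma infdneg_mem_Icons (x : L) : x ⊓ ∼x ∈ Icons L :=
  ⟨{x}, Finset.singleton_nonempty x, by simp⟩

lemma Fcomp_up {a b : L} (h : a ∈ Fcomp L) (hab : a ≤ b) : b ∈ Fcomp L := by
  obtain ⟨s, hs, hle⟩ := h; exact ⟨s, hs, hle.trans hab⟩

lemma Icons_down {a b : L} (h : a ∈ Icons L) (hab : b ≤ a) : b ∈ Icons L := by
  obtain ⟨s, hs, hle⟩ := h; exact ⟨s, hs, hab.trans hle⟩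

lemma Fcomp_inf {a b : L} (ha : a ∈ Fcomp L) (hb : b ∈ Fcomp L) : a ⊓ b ∈ Fcomp L := by
  classical
  obtain ⟨s, hs, hsa⟩ := ha
  obtain ⟨t, ht, htb⟩ := hb
  exact ⟨s ∪ t, hs.mono Finset.subset_union_left,
    le_inf ((Finset.inf'_mono _ Finset.subset_union_left hs).trans hsa)
      ((Finset.inf'_mono _ Finset.subset_union_right ht).trans htb)⟩

lemma Icons_sup {a b : L} (ha : a ∈ Icons L) (hb : b ∈ Icons L) : a ⊔ b ∈ Icons L := by
  classical
  obtain ⟨s, hs, hsa⟩ := ha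
  obtain ⟨t, ht, htb⟩ := hb
  exact ⟨s ∪ t, hs.mono Finset.subset_union_left,
    sup_le (hsa.trans (Finset.sup'_mono _ Finset.subset_union_left hs))
      (htb.trans (Finset.sup'_mono _ Finset.subset_union_right ht))⟩

lemma dneg_Fcomp {a : L} (h : a ∈ Fcomp L) : ∼a ∈ Icons L := by
  obtain ⟨s, hs, hle⟩ := h
  refine ⟨s, hs, ?_⟩
  calc ∼a ≤ ∼(s.inf' hs fun x => x ⊔ ∼x) := dneg_le_dneg hle
    _ = s.sup' hs (fun x => ∼(x ⊔ ∼x)) := dneg_inf' _ _ _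
    _ = s.sup' hs (fun x => x ⊓ ∼x) :=
        Finset.sup'_congr hs rfl (fun x _ => by
          rw [DeMorgan.dneg_sup, DeMorgan.dneg_dneg, inf_comm])

lemma dneg_Icons {a : L} (h : a ∈ Icons L) : ∼a ∈ Fcomp L := by
  obtain ⟨s, hs, hle⟩ := h
  refine ⟨s, hs, ?_⟩
  calc s.inf' hs (fun x => x ⊔ ∼x)
      = s.inf' hs (fun x => ∼(x ⊓ ∼x)) :=
        Finset.inf'_congr hs rfl (fun x _ => by
          rw [dneg_inf, DeMorgan.dneg_dneg, sup_comm])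
    _ = ∼(s.sup' hs fun x => x ⊓ ∼x) := (dneg_sup' _ _ _).symm
    _ ≤ ∼a := dneg_le_dneg hle

section Rel

variable [Nonempty L]

/-- The Boolean congruence preorder: `a ⊓ f ≤ b ⊔ i` for some `f ∈ Fcomp`, `i ∈ Icons`. -/
def leR (a b : L) : Prop := ∃ f ∈ Fcomp L, ∃ i ∈ Icons L, a ⊓ f ≤ b ⊔ i

lemma leR_of_le {a b : L} (h : a ≤ b) : leR a b := by
  obtain ⟨x⟩ := ‹Nonempty L›
  exact ⟨x ⊔ ∼x, supdneg_mem_Fcomp x, x ⊓ ∼x, infdneg_mem_Icons x,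
    inf_le_left.trans (h.trans le_sup_left)⟩

lemma leR_refl (a : L) : leR a a := leR_of_le le_rfl

lemma leR_trans {a b c : L} : leR a b → leR b c → leR a c := by
  rintro ⟨f, hf, i, hi, h1⟩ ⟨g, hg, j, hj, h2⟩
  refine ⟨f ⊓ g, Fcomp_inf hf hg, i ⊔ j, Icons_sup hi hj, ?_⟩
  calc a ⊓ (f ⊓ g) = (a ⊓ f) ⊓ g := (inf_assoc a f g).symm
    _ ≤ (b ⊔ i) ⊓ g := inf_le_inf_right g h1
    _ = (b ⊓ g) ⊔ (i ⊓ g) := inf_sup_right b i g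
    _ ≤ (c ⊔ j) ⊔ i := sup_le (h2.trans le_sup_left) (inf_le_left.trans le_sup_right)
    _ = c ⊔ (i ⊔ j) := by rw [sup_assoc, sup_comm j i]

lemma leR_sup {a b c d : L} : leR a b → leR c d → leR (a ⊔ c) (b ⊔ d) := by
  rintro ⟨f, hf, i, hi, h1⟩ ⟨g, hg, j, hj, h2⟩
  refine ⟨f ⊓ g, Fcomp_inf hf hg, i ⊔ j, Icons_sup hi hj, ?_⟩
  rw [inf_sup_right]
  exact sup_le
    (((inf_le_inf_left a inf_le_left).trans h1).trans (sup_le_sup le_sup_left le_sup_left))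
    (((inf_le_inf_left c inf_le_right).trans h2).trans (sup_le_sup le_sup_right le_sup_right))

lemma sup_inf_sup_le {b i d j : L} : (b ⊔ i) ⊓ (d ⊔ j) ≤ (b ⊓ d) ⊔ (i ⊔ j) := by
  rw [inf_sup_right]
  refine sup_le ?_ (inf_le_left.trans (le_sup_left.trans le_sup_right))
  rw [inf_sup_left]
  exact sup_le le_sup_left (inf_le_right.trans (le_sup_right.trans le_sup_right))

lemma leR_inf {a b c d : L} : leR a b → leR c d → leR (a ⊓ c) (b ⊓ d) := by
  rintro ⟨f, hf, i, hi, h1⟩ ⟨g, hg, j, hj, h2⟩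
  refine ⟨f ⊓ g, Fcomp_inf hf hg, i ⊔ j, Icons_sup hi hj, ?_⟩
  calc (a ⊓ c) ⊓ (f ⊓ g) = (a ⊓ f) ⊓ (c ⊓ g) := inf_inf_inf_comm a c f g
    _ ≤ (b ⊔ i) ⊓ (d ⊔ j) := inf_le_inf h1 h2
    _ ≤ (b ⊓ d) ⊔ (i ⊔ j) := sup_inf_sup_le

lemma leR_dneg {a b : L} : leR a b → leR (∼b) (∼a) := by
  rintro ⟨f, hf, i, hi, h1⟩
  refine ⟨∼i, dneg_Icons hi, ∼f, dneg_Fcomp hf, ?_⟩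
  have := dneg_le_dneg h1
  rwa [DeMorgan.dneg_sup, dneg_inf] at this

lemma leR_top (a x : L) : leR a (x ⊔ ∼x) := by
  obtain ⟨z⟩ := ‹Nonempty L›
  exact ⟨x ⊔ ∼x, supdneg_mem_Fcomp x, z ⊓ ∼z, infdneg_mem_Icons z,
    inf_le_right.trans le_sup_left⟩

lemma leR_bot (x a : L) : leR (x ⊓ ∼x) a := by
  obtain ⟨z⟩ := ‹Nonempty L›
  exact ⟨z ⊔ ∼z, supdneg_mem_Fcomp z, x ⊓ ∼x, infdneg_mem_Icons x,
    inf_le_left.trans le_sup_right⟩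

/-- The Boolean congruence as a setoid. -/
def bsetoid (L : Type u) [DeMorgan L] [Nonempty L] : Setoid L where
  r a b := leR a b ∧ leR b a
  iseqv := ⟨fun a => ⟨leR_refl a, leR_refl a⟩, fun h => ⟨h.2, h.1⟩,
    fun h1 h2 => ⟨leR_trans h1.1 h2.1, leR_trans h2.2 h1.2⟩⟩

/-- The Boolean quotient of a De Morgan lattice. -/
def BQ (L : Type u) [DeMorgan L] [Nonempty L] : Type u := Quotient (bsetoid L)

/-- The quotient map. -/
def mk (a : L) : BQ L := Quotient.mk (bsetoid L) a

lemma mk_surjective : Function.Surjective (mk (L := L)) := by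
  intro q
  exact Quotient.inductionOn q fun a => ⟨a, rfl⟩

instance : PartialOrder (BQ L) where
  le := Quotient.lift₂ leR (by
    intro a b a' b' ha hb
    exact propext ⟨fun h => leR_trans (leR_trans ha.2 h) hb.1,
      fun h => leR_trans (leR_trans ha.1 h) hb.2⟩)
  le_refl q := Quotient.inductionOn q leR_refl
  le_trans q r s := Quotient.inductionOn₃ q r s fun _ _ _ => leR_trans
  le_antisymm q r := Quotient.inductionOn₂ q r fun _ _ h1 h2 => Quotient.sound ⟨h1, h2⟩

lemma mk_le_mk {a b : L} : (mk a ≤ mk b) = leR a b := rfl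

instance : Lattice (BQ L) where
  sup := Quotient.map₂ (· ⊔ ·) fun _ _ ha _ _ hb => ⟨leR_sup ha.1 hb.1, leR_sup ha.2 hb.2⟩
  le_sup_left q r := Quotient.inductionOn₂ q r fun _ _ => leR_of_le le_sup_left
  le_sup_right q r := Quotient.inductionOn₂ q r fun _ _ => leR_of_le le_sup_right
  sup_le q r s := Quotient.inductionOn₃ q r s fun a b c h1 h2 =>
    leR_trans (leR_sup h1 h2) (leR_of_le (sup_idem c).le)
  inf := Quotient.map₂ (· ⊓ ·) fun _ _ ha _ _ hb => ⟨leR_inf ha.1 hb.1, leR_inf ha.2 hb.2⟩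
  inf_le_left q r := Quotient.inductionOn₂ q r fun _ _ => leR_of_le inf_le_left
  inf_le_right q r := Quotient.inductionOn₂ q r fun _ _ => leR_of_le inf_le_right
  le_inf q r s := Quotient.inductionOn₃ q r s fun a b c h1 h2 =>
    leR_trans (leR_of_le (inf_idem a).ge) (leR_inf h1 h2)

lemma mk_inf (x y : L) : mk (x ⊓ y) = mk x ⊓ mk y := rfl

lemma mk_sup (x y : L) : mk (x ⊔ y) = mk x ⊔ mk y := rfl

instance : DistribLattice (BQ L) where
  le_sup_inf q r s := Quotient.inductionOn₃ q r s fun _ _ _ => leR_of_le le_sup_inf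

noncomputable instance : BooleanAlgebra (BQ L) where
  __ := (inferInstance : DistribLattice (BQ L))
  compl := Quotient.map (fun a => ∼a) fun _ _ h => ⟨leR_dneg h.2, leR_dneg h.1⟩
  top := mk ((Classical.arbitrary L) ⊔ ∼(Classical.arbitrary L))
  bot := mk ((Classical.arbitrary L) ⊓ ∼(Classical.arbitrary L))
  le_top q := Quotient.inductionOn q fun a => leR_top a _
  bot_le q := Quotient.inductionOn q fun a => leR_bot _ a
  inf_compl_le_bot q := Quotient.inductionOn q fun a =>
    (show leR (a ⊓ ∼a) _ from leR_bot a _)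
  top_le_sup_compl q := Quotient.inductionOn q fun a =>
    (show leR _ (a ⊔ ∼a) from leR_top _ a)

lemma mk_compl (x : L) : mk (∼x) = (mk x)ᶜ := rfl

/-- Key lemma: a classical upset is saturated for `leR`. -/
lemma mem_of_leR {F : Set L} (hup : IsUpset F) (hcomp : AlmostComplete F)
    (hcons : AlmostConsistent F) {a x : L} (ha : a ∈ F) (hax : leR a x) : x ∈ F := by
  obtain ⟨f, ⟨s, hs, hsf⟩, i, ⟨t, ht, hti⟩, hle⟩ := hax
  have h1 : ∀ (s : Finset L) (hs : s.Nonempty), ∀ a ∈ F,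
      a ⊓ s.inf' hs (fun x => x ⊔ ∼x) ∈ F := by
    intro s hs
    induction hs using Finset.Nonempty.cons_induction with
    | singleton y =>
      intro a ha
      simpa using hcomp a ha y
    | cons y s hy hs ih =>
      intro a ha
      rw [Finset.inf'_cons, inf_comm (y ⊔ ∼y), ← inf_assoc]
      exact hcomp _ (ih a ha) y
  have hf : a ⊓ f ∈ F :=
    hup (h1 s hs a ha) (inf_le_inf_left a hsf)
  have h3 : x ⊔ t.sup' ht (fun z => z ⊓ ∼z) ∈ F :=
    hup (hup hf hle) (sup_le_sup_left hti x)
  have h4 : ∀ (t : Finset L) (ht : t.Nonempty), ∀ x : L,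
      x ⊔ t.sup' ht (fun z => z ⊓ ∼z) ∈ F → x ∈ F := by
    intro t ht
    induction ht using Finset.Nonempty.cons_induction with
    | singleton z =>
      intro x hx
      simp only [Finset.sup'_singleton] at hx
      exact hcons z x (by rwa [sup_comm] at hx)
    | cons z t hz ht ih =>
      intro x hx
      rw [Finset.sup'_cons (H := ht), sup_left_comm] at hx
      exact ih x (hcons z _ hx)
  exact h4 t ht x h3

end Rel

section Hom

variable {α β : Type*} [Lattice α] [Lattice β]

lemma hom_mono (h : α → β) (hinf : ∀ x y, h (x ⊓ y) = h x ⊓ h y)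
    {x y : α} (hxy : x ≤ y) : h x ≤ h y := by
  have : h x = h x ⊓ h y := by rw [← hinf, inf_eq_left.mpr hxy]
  rw [this]; exact inf_le_right

lemma hom_inf' [DecidableEq β] (h : α → β) (hinf : ∀ x y, h (x ⊓ y) = h x ⊓ h y)
    (s : Finset α) (hs : s.Nonempty) :
    h (s.inf' hs id) = (s.image h).inf' (hs.image h) id := by
  rw [Finset.inf'_image]
  exact Finset.apply_inf'_eq_inf'_comp hs h hinf

/-- `n`-filters pull back along meet-homomorphisms. -/
lemma nfilter_preimage {n : ℕ} (h : α → β) (hinf : ∀ x y, h (x ⊓ y) = h x ⊓ h y)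
    {G : Set β} (hG : IsNFilter n G) : IsNFilter n (h ⁻¹' G) := by
  classical
  refine ⟨fun x y hx hxy => hG.1 hx (hom_mono h hinf hxy), ?_⟩
  intro Y hY H
  have key : (Y.image h).inf' (hY.image h) id ∈ G := by
    apply hG.2
    intro X' hX' hsub hcard
    let σ : {b // b ∈ X'} → α := fun b => (Finset.mem_image.mp (hsub b.2)).choose
    have hσY : ∀ b, σ b ∈ Y := fun b => (Finset.mem_image.mp (hsub b.2)).choose_spec.1
    have hσ : ∀ b, h (σ b) = b.1 := fun b => (Finset.mem_image.mp (hsub b.2)).choose_spec.2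
    have hane : X'.attach.Nonempty := Finset.attach_nonempty_iff.mpr hX'
    set X : Finset α := X'.attach.image σ with hXdef
    have hXne : X.Nonempty := hane.image σ
    have hXY : X ⊆ Y := by
      intro a haX
      obtain ⟨b, _, rfl⟩ := Finset.mem_image.mp haX
      exact hσY b
    have hXcard : X.card ≤ n :=
      le_trans (Finset.card_image_le.trans (by rw [Finset.card_attach])) hcard
    have hmem : X.inf' hXne id ∈ h ⁻¹' G := H X hXne hXY hXcard
    have himg : X.image h = X' := by
      rw [hXdef, Finset.image_image]
      have heq : (h ∘ σ) = fun b : {b // b ∈ X'} => b.1 := funext hσ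
      rw [heq]
      exact Finset.attach_image_val
    have := hom_inf' h hinf X hXne
    rw [Finset.inf'_congr (H := hXne.image h) himg (fun _ _ => rfl)] at this
    rw [← this]
    exact hmem
  have := hom_inf' h hinf Y hY
  rw [Set.mem_preimage, this]
  exact key

/-- `n`-filters push forward along surjective meet-homomorphisms when the set is saturated. -/
lemma nfilter_image {n : ℕ} (h : α → β) (hsurj : Function.Surjective h)
    (hinf : ∀ x y, h (x ⊓ y) = h x ⊓ h y) {F : Set α} {G : Set β}
    (hFG : F = h ⁻¹' G) (hF : IsNFilter n F) (hGup : IsUpset G) : IsNFilter n G := by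
  classical
  refine ⟨hGup, ?_⟩
  intro Y' hY' H
  let σ : β → α := Function.surjInv hsurj
  have hσ : ∀ b, h (σ b) = b := Function.surjInv_eq hsurj
  set Y : Finset α := Y'.image σ with hYdef
  have hYne : Y.Nonempty := hY'.image σ
  have himg : Y.image h = Y' := by
    rw [hYdef, Finset.image_image]
    have heq : (h ∘ σ) = id := funext hσ
    rw [heq, Finset.image_id]
  have hYinf : Y.inf' hYne id ∈ F := by
    apply hF.2
    intro X hX hXY hXc
    have h1 : X.image h ⊆ Y' := by
      intro b hb
      obtain ⟨a, haX, rfl⟩ := Finset.mem_image.mp hb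
      obtain ⟨b', hb', rfl⟩ := Finset.mem_image.mp (hXY haX)
      rw [hσ b']
      exact hb'
    have h2 := H (X.image h) (hX.image h) h1 (Finset.card_image_le.trans hXc)
    rw [hFG, Set.mem_preimage, hom_inf' h hinf X hX]
    exact h2
  rw [hFG, Set.mem_preimage] at hYinf
  rw [hom_inf' h hinf Y hYne] at hYinf
  rwa [Finset.inf'_congr (H := hYne.image h) himg (fun _ _ => rfl)] at hYinf

end Hom

/-- The backward direction: preimages of nonempty proper upsets of Boolean algebras are
classical upsets. -/
lemma backward {L : Type u} [DeMorgan L] {B : Type*} [BooleanAlgebra B] (h : L → B)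
    (G : Set B) (hsurj : Function.Surjective h)
    (hinf : ∀ x y : L, h (x ⊓ y) = h x ⊓ h y)
    (hsup : ∀ x y : L, h (x ⊔ y) = h x ⊔ h y)
    (hneg : ∀ x : L, h (∼x) = (h x)ᶜ)
    (hup : IsUpset G) (hne : G.Nonempty) (hproper : G ≠ Set.univ) :
    IsUpset (h ⁻¹' G) ∧ IsClassicalUpset (h ⁻¹' G) := by
  have hupF : IsUpset (h ⁻¹' G) := fun x y hx hxy => hup hx (hom_mono h hinf hxy)
  refine ⟨hupF, ⟨⟨?_, ?_⟩, ?_, ?_⟩⟩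
  · -- almost complete
    intro x hx y
    have heq : h (x ⊓ (y ⊔ ∼y)) = h x := by
      rw [hinf, hsup, hneg, sup_compl_eq_top, inf_top_eq]
    show h (x ⊓ (y ⊔ ∼y)) ∈ G
    rw [heq]; exact hx
  · obtain ⟨b, hb⟩ := hne
    obtain ⟨x, rfl⟩ := hsurj b
    exact ⟨x, hb⟩
  · -- almost consistent
    intro x y hxy
    have heq : h ((x ⊓ ∼x) ⊔ y) = h y := by
      rw [hsup, hinf, hneg, inf_compl_eq_bot, bot_sup_eq]
    have : h ((x ⊓ ∼x) ⊔ y) ∈ G := hxy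
    rwa [heq] at this
  · obtain ⟨b, hb⟩ := Set.ne_univ_iff_exists_notMem G |>.mp hproper
    obtain ⟨x, rfl⟩ := hsurj b
    exact Set.ne_univ_iff_exists_notMem _ |>.mpr ⟨x, hb⟩

end S10

/-- classical upsets (resp. classical `n`-filters) of a De Morgan lattice are
precisely the preimages of nonempty proper upsets (resp. `n`-filters) of Boolean algebras
under surjective lattice homomorphisms commuting with negation/complementation. -/
theorem statement10 {L : Type u} [DeMorgan L] [Nonempty L] (n : ℕ) (hn : 1 ≤ n)
    (F : Set L) :
    ((IsUpset F ∧ IsClassicalUpset F) ↔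
      ∃ (B : Type u) (_ : BooleanAlgebra B) (h : L → B) (G : Set B),
        Function.Surjective h ∧
        (∀ x y : L, h (x ⊓ y) = h x ⊓ h y) ∧
        (∀ x y : L, h (x ⊔ y) = h x ⊔ h y) ∧
        (∀ x : L, h (∼x) = (h x)ᶜ) ∧
        IsUpset G ∧ G.Nonempty ∧ G ≠ Set.univ ∧ F = h ⁻¹' G) ∧
    ((IsClassicalUpset F ∧ IsNFilter n F) ↔
      ∃ (B : Type u) (_ : BooleanAlgebra B) (h : L → B) (G : Set B),
        Function.Surjective h ∧
        (∀ x y : L, h (x ⊓ y) = h x ⊓ h y) ∧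
        (∀ x y : L, h (x ⊔ y) = h x ⊔ h y) ∧
        (∀ x : L, h (∼x) = (h x)ᶜ) ∧
        IsUpset G ∧ G.Nonempty ∧ G ≠ Set.univ ∧ IsNFilter n G ∧ F = h ⁻¹' G) := by
  classical
  have fwd : IsUpset F → AlmostComplete F → AlmostConsistent F → F ≠ Set.univ →
      IsUpset (S10.mk '' F) ∧ S10.mk '' F ≠ Set.univ ∧ F = S10.mk ⁻¹' (S10.mk '' F) := by
    intro hup hcomp hcons hproper
    have hGup : IsUpset (S10.mk '' F) := by
      rintro q r ⟨a, haF, rfl⟩ hle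
      obtain ⟨x, rfl⟩ := S10.mk_surjective r
      exact ⟨x, S10.mem_of_leR hup hcomp hcons haF hle, rfl⟩
    have hFG : F = S10.mk ⁻¹' (S10.mk '' F) := by
      ext x
      refine ⟨fun hx => ⟨x, hx, rfl⟩, ?_⟩
      rintro ⟨a, haF, hma⟩
      exact S10.mem_of_leR hup hcomp hcons haF (Quotient.exact hma).1
    refine ⟨hGup, ?_, hFG⟩
    obtain ⟨y, hy⟩ := (Set.ne_univ_iff_exists_notMem F).mp hproper
    refine (Set.ne_univ_iff_exists_notMem _).mpr ⟨S10.mk y, ?_⟩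
    rintro ⟨a, haF, hma⟩
    exact hy (S10.mem_of_leR hup hcomp hcons haF (Quotient.exact hma).1)
  constructor
  · constructor
    · rintro ⟨hup, ⟨hcomp, hne⟩, hcons, hproper⟩
      obtain ⟨hGup, hGproper, hFG⟩ := fwd hup hcomp hcons hproper
      exact ⟨S10.BQ L, inferInstance, S10.mk, S10.mk '' F, S10.mk_surjective,
        S10.mk_inf, S10.mk_sup, S10.mk_compl, hGup, hne.image _, hGproper, hFG⟩
    · rintro ⟨B, _, h, G, hsurj, hinf, hsup, hneg, hup, hne, hproper, rfl⟩
      exact S10.backward h G hsurj hinf hsup hneg hup hne hproper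
  · constructor
    · rintro ⟨⟨⟨hcomp, hne⟩, hcons, hproper⟩, hnf⟩
      obtain ⟨hGup, hGproper, hFG⟩ := fwd hnf.1 hcomp hcons hproper
      exact ⟨S10.BQ L, inferInstance, S10.mk, S10.mk '' F, S10.mk_surjective,
        S10.mk_inf, S10.mk_sup, S10.mk_compl, hGup, hne.image _, hGproper,
        S10.nfilter_image S10.mk S10.mk_surjective S10.mk_inf hFG hnf hGup, hFG⟩
    · rintro ⟨B, _, h, G, hsurj, hinf, hsup, hneg, hup, hne, hproper, hGnf, rfl⟩
      obtain ⟨hupF, hclassF⟩ := S10.backward h G hsurj hinf hsup hneg hup hne hproper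
      exact ⟨hclassF, S10.nfilter_preimage h hinf hGnf⟩
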